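/- If S ⊆ {1, …, d} is invariant, then the set S ∩ AN_Y is also invariant. -/

import Mathlib

/-- Nodes of the graph: the environment node `E`, predictor nodes `V j` for
`j ∈ {1, …, d}` (represented by `Fin d`), and the response node `Y`. -/
inductive Node (d : ℕ) : Type where
  | E : Node d
  | V : Fin d → Node d
  | Y : Node d
deriving DecidableEq

/-- A directed acyclic graph on `{E} ∪ {1, …, d} ∪ {Y}` in which `E` has no
parents (`E` is exogenous). -/
structure CGraph (d : ℕ) where
  adj : Node d → Node d → Prop
  acyclic : ∀ v, ¬ Relation.TransGen adj v v
  exogenous : ∀ v, ¬ adj v Node.E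

namespace CGraph

variable {d : ℕ} (G : CGraph d)

/-- Undirected adjacency: an edge between `u` and `v` in either direction. -/
def Edge (u v : Node d) : Prop := G.adj u v ∨ G.adj v u

/-- `p` is a path between `a` and `b`: a duplicate-free list of nodes starting
at `a`, ending at `b`, with consecutive nodes adjacent (in either direction). -/
def IsPath (p : List (Node d)) (a b : Node d) : Prop :=
  p.head? = some a ∧ p.getLast? = some b ∧ p.Nodup ∧ p.Chain' G.Edge

/-- `x` is a (strict) descendant of `v`. -/
def Desc (v x : Node d) : Prop := Relation.TransGen G.adj v x

/-- The consecutive triple `u, m, w` on a path blocks the path given `C`: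
either `m` is a non-collider lying in `C`, or `m` is a collider such that
neither `m` nor any of its descendants lies in `C`. -/
def BlockedAt (C : Set (Node d)) (u m w : Node d) : Prop :=
  (¬ (G.adj u m ∧ G.adj w m) ∧ m ∈ C) ∨
  ((G.adj u m ∧ G.adj w m) ∧ m ∉ C ∧ ∀ x, G.Desc m x → x ∉ C)

/-- A path `p` is blocked by `C` if some consecutive triple on it blocks it. -/
def Blocked (C : Set (Node d)) (p : List (Node d)) : Prop :=
  ∃ q u m w r, p = q ++ u :: m :: w :: r ∧ G.BlockedAt C u m w

/-- `a` and `b` are d-separated given `C`: every path between them is blocked. -/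
def DSep (a b : Node d) (C : Set (Node d)) : Prop :=
  ∀ p, G.IsPath p a b → G.Blocked C p

/-- `S ⊆ {1, …, d}` is invariant if `E` and `Y` are d-separated given `S`. -/
def Invariant (S : Set (Fin d)) : Prop := G.DSep Node.E Node.Y (Node.V '' S)

/-- `S` is minimally invariant if it is invariant and no strict subset of `S`
is invariant. -/
def MinInvariant (S : Set (Fin d)) : Prop :=
  G.Invariant S ∧ ∀ S', S' ⊂ S → ¬ G.Invariant S'

/-- `S_AS`: the union of all minimally invariant sets. -/
def SAS : Set (Fin d) := ⋃₀ {S | G.MinInvariant S}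

/-- `S_ICP`: the intersection of all invariant sets (`∅` if there are none). -/
def SICP : Set (Fin d) :=
  {j | (∃ S, G.Invariant S) ∧ ∀ S, G.Invariant S → j ∈ S}

/-- `S_AS^m`: the union of all minimally invariant sets of cardinality `≤ m`. -/
def SASm (m : ℕ) : Set (Fin d) := ⋃₀ {S | G.MinInvariant S ∧ S.ncard ≤ m}

/-- The parents of `Y` among `{1, …, d}`. -/
def paY : Set (Fin d) := {j | G.adj (Node.V j) Node.Y}

/-- The children of `E` among `{1, …, d}`. -/
def chE : Set (Fin d) := {j | G.adj Node.E (Node.V j)}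

/-- The ancestors of `Y` among `{1, …, d}`. -/
def anY : Set (Fin d) := {j | Relation.TransGen G.adj (Node.V j) Node.Y}

/-- `PA(A)`: the union of the parent sets of the elements of `A ⊆ {1, …, d}`. -/
def paOf (A : Set (Fin d)) : Set (Fin d) := {j | ∃ i ∈ A, G.adj (Node.V j) (Node.V i)}

end CGraph

/-- Auxiliary: following directed edges along a path starting with `m → w`,
we either reach the last node of the path (so `m` is an ancestor of it), or
we hit a collider `c` on the path with `m` an ancestor of `c`. -/
lemma CGraph.follow {d : ℕ} (G : CGraph d) :
    ∀ (r : List (Node d)) (m w : Node d),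
      (m :: w :: r).Chain' G.Edge → G.adj m w →
      Relation.TransGen G.adj m ((m :: w :: r).getLast (by simp)) ∨
      ∃ q a c b r', m :: w :: r = q ++ a :: c :: b :: r' ∧
        G.adj a c ∧ G.adj b c ∧ Relation.TransGen G.adj m c := by
  intro r
  induction r with
  | nil =>
    intro m w _ ha
    left
    simpa using Relation.TransGen.single ha
  | cons x r' ih =>
    intro m w hc ha
    replace hc := List.isChain_cons_cons.mp hc
    by_cases hwx : G.adj w x
    · rcases ih w x hc.2 hwx with h | ⟨q, a, c, b, r'', heq, h1, h2, h3⟩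
      · left
        have hl : (m :: w :: x :: r').getLast (by simp)
            = (w :: x :: r').getLast (by simp) := by
          rw [List.getLast_cons]
        rw [hl]
        exact Relation.TransGen.head ha h
      · right
        exact ⟨m :: q, a, c, b, r'', by simp [heq], h1, h2,
          Relation.TransGen.head ha h3⟩
    · have hxw : G.adj x w :=
        ((List.isChain_cons_cons.mp hc.2).1).resolve_left hwx
      right
      exact ⟨[], m, w, x, r', rfl, ha, hxw, Relation.TransGen.single ha⟩

/-- Auxiliary: nothing is an ancestor of the exogenous node `E`. -/
lemma CGraph.not_transGen_E {d : ℕ} (G : CGraph d) (a : Node d) :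
    ¬ Relation.TransGen G.adj a Node.E := by
  intro h
  generalize hE : (Node.E : Node d) = e at h
  induction h with
  | single h => exact G.exogenous _ (hE ▸ h)
  | tail _ h _ => exact G.exogenous _ (hE ▸ h)

/-- if `S ⊆ {1, …, d}` is invariant, then `S ∩ AN_Y` is also
invariant. -/
theorem invariant_inter_ancestors {d : ℕ} (G : CGraph d) (S : Set (Fin d))
    (hS : G.Invariant S) :
    G.Invariant (S ∩ G.anY) := by
  intro p hp
  obtain ⟨q, u, m, w, r, hpeq, hb⟩ := hS p hp
  set C' : Set (Node d) := Node.V '' (S ∩ G.anY) with hC'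
  have hsub : C' ⊆ Node.V '' S := Set.image_mono Set.inter_subset_left
  rcases hb with ⟨hnc, hm⟩ | ⟨hcol, hmn, hdesc⟩
  · -- m is a non-collider in V '' S
    obtain ⟨j, hjS, rfl⟩ := hm
    by_cases hjan : j ∈ G.anY
    · exact ⟨q, u, Node.V j, w, r, hpeq, Or.inl ⟨hnc, ⟨j, ⟨hjS, hjan⟩, rfl⟩⟩⟩
    · -- key fact: nothing reachable from m = V j is in C'
      have key : ∀ x, Relation.ReflTransGen G.adj (Node.V j) x → x ∉ C' := by
        intro x hx hxC
        obtain ⟨k, ⟨_, hkan⟩, rfl⟩ := hxC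
        exact hjan (Relation.TransGen.trans_right hx hkan)
      -- chain facts
      have hsuf : (Node.V j :: w :: r) <:+ p := ⟨q ++ [u], by simp [hpeq]⟩
      have hsuf' : (u :: Node.V j :: w :: r) <:+ p := ⟨q, by simp [hpeq]⟩
      have hchain := hp.2.2.2
      have hch1 : (u :: Node.V j :: w :: r).Chain' G.Edge := hchain.suffix hsuf'
      replace hch1 := List.isChain_cons_cons.mp hch1
      have hEum : G.Edge u (Node.V j) := hch1.1
      have hch2 : (Node.V j :: w :: r).Chain' G.Edge := hch1.2
      have hEmw : G.Edge (Node.V j) w := (List.isChain_cons_cons.mp hch2).1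
      have hdir : G.adj (Node.V j) u ∨ G.adj (Node.V j) w := by
        rcases hEum with h1 | h1
        · rcases hEmw with h2 | h2
          · exact Or.inr h2
          · exact absurd ⟨h1, h2⟩ hnc
        · exact Or.inl h1
      rcases hdir with hmu | hmw
      · -- follow backwards towards E through the reversed prefix
        have hpre : p = (q ++ [u, Node.V j]) ++ w :: r := by simp [hpeq]
        have hchpre : (q ++ [u, Node.V j]).Chain' G.Edge := by
          refine hchain.prefix ⟨w :: r, hpre.symm⟩
        have hchrev : ((q ++ [u, Node.V j]).reverse).Chain' G.Edge := by
          refine List.isChain_reverse.mpr ?_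
          exact hchpre.imp (fun a b hab => hab.symm)
        have hrev : (q ++ [u, Node.V j]).reverse
            = Node.V j :: u :: q.reverse := by simp
        rw [hrev] at hchrev
        rcases G.follow q.reverse (Node.V j) u hchrev hmu with h | hcollider
        · -- reached the head of p, which is E : contradiction with exogeneity
          exfalso
          have hlast : (Node.V j :: u :: q.reverse).getLast (by simp)
              = Node.E := by
            have h1 : (Node.V j :: u :: q.reverse).getLast (by simp)
                = ((q ++ [u, Node.V j]).reverse).getLast (by simp [hrev]) := by
              congr 1
              · exact hrev.symm
            have h2 : ((q ++ [u, Node.V j]).reverse).getLast (by simp)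
                = (q ++ [u, Node.V j]).head (by simp) := by
              rw [List.getLast_reverse]
            have h3 : p.head? = some ((q ++ [u, Node.V j]).head (by simp)) := by
              rw [hpre, List.head?_append_of_ne_nil _ (by simp),
                List.head?_eq_head]
            rw [hp.1] at h3
            rw [h1, h2]
            exact (Option.some_injective _ h3).symm
          rw [hlast] at h
          exact G.not_transGen_E _ h
        · -- found a collider; it blocks the path given C'
          obtain ⟨q', a, c, b, r'', heq, hac, hbc, hmc⟩ := hcollider
          have h2 : q ++ [u, Node.V j]
              = r''.reverse ++ b :: c :: a :: q'.reverse := by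
            have := congrArg List.reverse heq
            simp at this
            rw [← List.reverse_reverse (q ++ [u, Node.V j]), hrev]
            simp [this]
          have hpeq2 : p = r''.reverse ++ b :: c :: a :: (q'.reverse ++ w :: r) := by
            rw [hpre, h2]
            simp
          refine ⟨r''.reverse, b, c, a, q'.reverse ++ w :: r, hpeq2,
            Or.inr ⟨⟨hbc, hac⟩, key c hmc.to_reflTransGen,
              fun x hx => key x (hmc.trans hx).to_reflTransGen⟩⟩
      · -- follow forwards towards Y
        rcases G.follow r (Node.V j) w hch2 hmw with h | hcollider
        · -- reached the last node of p, which is Y : so j ∈ anY, contradiction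
          exfalso
          have hlast : (Node.V j :: w :: r).getLast (by simp) = Node.Y := by
            have h3 : p.getLast? = some ((Node.V j :: w :: r).getLast (by simp)) := by
              obtain ⟨t, ht⟩ := hsuf
              rw [← ht, List.getLast?_append_of_ne_nil _ (by simp),
                List.getLast?_eq_getLast (by simp)]
            rw [hp.2.1] at h3
            exact (Option.some_injective _ h3).symm
          rw [hlast] at h
          exact hjan h
        · obtain ⟨q', a, c, b, r'', heq, hac, hbc, hmc⟩ := hcollider
          have hpeq2 : p = (q ++ u :: q') ++ a :: c :: b :: r'' := by
            rw [hpeq]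
            simp [heq]
          refine ⟨q ++ u :: q', a, c, b, r'', hpeq2,
            Or.inr ⟨⟨hac, hbc⟩, key c hmc.to_reflTransGen,
              fun x hx => key x (hmc.trans hx).to_reflTransGen⟩⟩
  · -- m is a collider with no descendant in V '' S, hence none in C'
    exact ⟨q, u, m, w, r, hpeq, Or.inr ⟨hcol, fun h => hmn (hsub h),
      fun x hx hxC => hdesc x hx (hsub hxC)⟩⟩
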